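/- Let S be a complete and consistent SPN and let v be a product node with children v_1,...,v_l. If a variable X lies in scope(v_i) ∩ scope(v_j) for some i ≠ j, then there is a single value x* of X such that every monomial in the expanded form of f_{v_i} and every monomial in the expanded form of f_{v_j} contains the indicator I[X = x*]. -/

import Mathlib

noncomputable section

open Finset

/-- A Sum-Product Network over `N` Boolean variables: leaves are indicators
`I[X_i = b]`, internal nodes are weighted sums and products. -/
inductive SPN (N : ℕ) where
  | leaf (i : Fin N) (b : Bool)
  | sum (k : ℕ) (w : Fin k → ℝ) (ch : Fin k → SPN N)
  | prod (k : ℕ) (ch : Fin k → SPN N)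

namespace SPN

variable {N : ℕ}

/-- The network polynomial, evaluated at a complete assignment. -/
def eval : SPN N → (Fin N → Bool) → ℝ
  | .leaf i b, x => if x i = b then 1 else 0
  | .sum _ w ch, x => ∑ j, w j * eval (ch j) x
  | .prod _ ch, x => ∏ j, eval (ch j) x

/-- The scope of a node: the variables appearing among its descendant indicators. -/
def scope : SPN N → Finset (Fin N)
  | .leaf i _ => {i}
  | .sum _ _ ch => univ.biUnion fun j => scope (ch j)
  | .prod _ ch => univ.biUnion fun j => scope (ch j)

/-- Size of an SPN: number of nodes plus number of edges. -/
def size : SPN N → ℕ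
  | .leaf _ _ => 1
  | .sum k _ ch => 1 + k + ∑ j, size (ch j)
  | .prod k ch => 1 + k + ∑ j, size (ch j)

/-- Completeness: all children of every sum node have the same scope. -/
def complete : SPN N → Prop
  | .leaf _ _ => True
  | .sum _ _ ch => (∀ i j, scope (ch i) = scope (ch j)) ∧ ∀ j, complete (ch j)
  | .prod _ ch => ∀ j, complete (ch j)

/-- Decomposability: children of every product node have pairwise disjoint scopes. -/
def decomposable : SPN N → Prop
  | .leaf _ _ => True
  | .sum _ _ ch => ∀ j, decomposable (ch j)
  | .prod _ ch =>
      (∀ i j, i ≠ j → Disjoint (scope (ch i)) (scope (ch j))) ∧ ∀ j, decomposable (ch j)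

/-- The set of indicators `(variable, value)` appearing among descendants. -/
def indicators : SPN N → Finset (Fin N × Bool)
  | .leaf i b => {(i, b)}
  | .sum _ _ ch => univ.biUnion fun j => indicators (ch j)
  | .prod _ ch => univ.biUnion fun j => indicators (ch j)

/-- Consistency: no variable appears negated in one child of a product node and
non-negated in another child. -/
def consistent : SPN N → Prop
  | .leaf _ _ => True
  | .sum _ _ ch => ∀ j, consistent (ch j)
  | .prod _ ch =>
      (∀ i j X, i ≠ j → (X, true) ∈ indicators (ch i) →
        (X, false) ∈ indicators (ch j) → False) ∧ ∀ j, consistent (ch j)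

/-- All sum-node weights are nonnegative. -/
def nonnegWeights : SPN N → Prop
  | .leaf _ _ => True
  | .sum _ w ch => (∀ j, 0 ≤ w j) ∧ ∀ j, nonnegWeights (ch j)
  | .prod _ ch => ∀ j, nonnegWeights (ch j)

/-- Weight-normalized: at every sum node the weights are nonnegative and sum to 1. -/
def weightNormalized : SPN N → Prop
  | .leaf _ _ => True
  | .sum _ w ch => (∀ j, 0 ≤ w j) ∧ (∑ j, w j) = 1 ∧ ∀ j, weightNormalized (ch j)
  | .prod _ ch => ∀ j, weightNormalized (ch j)

/-- Extend an assignment of the scope variables to a complete assignment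
(variables outside the scope are set to `false`; `eval` does not depend on them). -/
def extendScope (S : SPN N) (y : {i // i ∈ scope S} → Bool) : Fin N → Bool :=
  fun i => if h : i ∈ scope S then y ⟨i, h⟩ else false

/-- The sum of the network polynomial of `S` over all assignments of the
variables in `scope S`. -/
def val (S : SPN N) : ℝ :=
  ∑ y : {i // i ∈ scope S} → Bool, eval S (extendScope S y)

/-- The probability distribution induced by an SPN:
`Pr S x = f_S(x) / Σ_y f_S(y)`, the sum ranging over assignments of the scope. -/
def Pr (S : SPN N) (x : Fin N → Bool) : ℝ := eval S x / val S

end SPN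
namespace SPN

variable {N : ℕ}

/-- A monomial: a coefficient together with a multiset of indicators. -/
abbrev Monomial (N : ℕ) := ℝ × Multiset (Fin N × Bool)

/-- Product of two sum-of-products expansions. -/
def mulMono (a b : Multiset (Monomial N)) : Multiset (Monomial N) :=
  a.bind fun m => b.map fun m' => (m.1 * m'.1, m.2 + m'.2)

/-- The fully expanded sum-of-products form of the network polynomial,
obtained by distributing products over sums. -/
def monomials : SPN N → Multiset (Monomial N)
  | .leaf i b => {(1, {(i, b)})}
  | .sum _ w ch => ∑ j, (monomials (ch j)).map fun m => (w j * m.1, m.2)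
  | .prod k ch => (List.ofFn fun j : Fin k => monomials (ch j)).foldr mulMono {(1, 0)}

/-- Two SPNs have the same DAG structure (only sum-node weights may differ). -/
def sameShape : SPN N → SPN N → Prop
  | .leaf i b, .leaf i' b' => i = i' ∧ b = b'
  | .sum k _ ch, .sum k' _ ch' => ∃ h : k = k', ∀ j, sameShape (ch j) (ch' (Fin.cast h j))
  | .prod k ch, .prod k' ch' => ∃ h : k = k', ∀ j, sameShape (ch j) (ch' (Fin.cast h j))
  | _, _ => False

/-- `IsChild c p`: `c` is a child of `p`. -/
inductive IsChild : SPN N → SPN N → Prop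
  | sum {k : ℕ} {w : Fin k → ℝ} {ch : Fin k → SPN N} (j : Fin k) :
      IsChild (ch j) (.sum k w ch)
  | prod {k : ℕ} {ch : Fin k → SPN N} (j : Fin k) :
      IsChild (ch j) (.prod k ch)

/-- `Descendant d v`: `d` is a (weak) descendant of `v`. -/
def Descendant : SPN N → SPN N → Prop := Relation.ReflTransGen IsChild

/-- A decision stump: a univariate distribution `p·I[X=1] + (1-p)·I[X=0]`
over a single Boolean variable, used as terminal node of a normal SPN. -/
def isStump : SPN N → Prop
  | .sum 2 w ch =>
      (∃ i, ch 0 = .leaf i true ∧ ch 1 = .leaf i false) ∧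
      0 ≤ w 0 ∧ 0 ≤ w 1 ∧ w 0 + w 1 = 1
  | _ => False

/-- Condition 3 of normality: terminal nodes are univariate distributions and
every (proper) sum node has scope of size at least 2. -/
def normal3 : SPN N → Prop
  | .leaf _ _ => False
  | .sum k w ch =>
      isStump (SPN.sum k w ch) ∨
      (2 ≤ (scope (SPN.sum k w ch)).card ∧ ∀ j, normal3 (ch j))
  | .prod _ ch => ∀ j, normal3 (ch j)

/-- A normal SPN: complete, decomposable, weight-normalized, terminal nodes are
univariate distributions, and sum nodes have scope of size at least 2. -/
def normal (S : SPN N) : Prop :=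
  complete S ∧ decomposable S ∧ weightNormalized S ∧ normal3 S

/-- The height of an SPN: length of the longest root-to-leaf path. -/
def height : SPN N → ℕ
  | .leaf _ _ => 0
  | .sum _ _ ch => 1 + Finset.univ.sup fun j => height (ch j)
  | .prod _ ch => 1 + Finset.univ.sup fun j => height (ch j)

/-- Sum layers alternate with product layers. -/
def alternating : SPN N → Prop
  | .leaf _ _ => True
  | .sum _ _ ch => ∀ j,
      (¬ ∃ (k' : ℕ) (w' : Fin k' → ℝ) (ch' : Fin k' → SPN N), ch j = SPN.sum k' w' ch') ∧
      alternating (ch j)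
  | .prod _ ch => ∀ j,
      (¬ ∃ (k' : ℕ) (ch' : Fin k' → SPN N), ch j = SPN.prod k' ch') ∧
      alternating (ch j)

/-- The number of hidden-variable parents of the observable `X` in the constructed
BN: the number of sum nodes whose scope contains `X`. -/
def parentCount : SPN N → Fin N → ℕ
  | .leaf _ _, _ => 0
  | .sum k w ch, X =>
      (if X ∈ scope (SPN.sum k w ch) then 1 else 0) + ∑ j, parentCount (ch j) X
  | .prod _ ch, X => ∑ j, parentCount (ch j) X

/-- The number of sum nodes (hidden variables of the constructed BN). -/
def countSum : SPN N → ℕ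
  | .leaf _ _ => 0
  | .sum _ _ ch => 1 + ∑ j, countSum (ch j)
  | .prod _ ch => ∑ j, countSum (ch j)

/-- Total size of the decision-stump ADDs of the hidden variables. -/
def stumpsSize : SPN N → ℕ
  | .leaf _ _ => 0
  | .sum k _ ch => (1 + k) + ∑ j, stumpsSize (ch j)
  | .prod _ ch => ∑ j, stumpsSize (ch j)

/-- Total number of edges of the bipartite BN graph: a hidden variable `H_v`
points to observable `X` iff `X ∈ scope v`. -/
def sumScopeEdges : SPN N → ℕ
  | .leaf _ _ => 0
  | .sum k w ch => (scope (SPN.sum k w ch)).card + ∑ j, sumScopeEdges (ch j)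
  | .prod _ ch => ∑ j, sumScopeEdges (ch j)

/-- Size of the ADD `A_X` of observable `X`: the size of the sub-SPN induced by
the nodes whose scope contains `X` (an upper bound on the contracted ADD). -/
def addSize : SPN N → Fin N → ℕ
  | .leaf i _, X => if i = X then 1 else 0
  | .sum k w ch, X =>
      (if X ∈ scope (SPN.sum k w ch) then
        1 + (Finset.univ.filter fun j => X ∈ scope (ch j)).card
       else 0) + ∑ j, addSize (ch j) X
  | .prod k ch, X =>
      (if X ∈ scope (SPN.prod k ch) then
        1 + (Finset.univ.filter fun j => X ∈ scope (ch j)).card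
       else 0) + ∑ j, addSize (ch j) X

end SPN

/-- A bipartite Bayesian network over `N` observable Boolean variables:
hidden (source) variables `H` with unconditional priors, and observable
variables whose CPDs are conditioned on the hidden variables. -/
structure BayesNet (N : ℕ) where
  H : Type
  fintypeH : Fintype H
  decEqH : DecidableEq H
  dom : H → ℕ
  prior : (h : H) → Fin (dom h) → ℝ
  cpd : Fin N → ((h : H) → Fin (dom h)) → Bool → ℝ

attribute [instance] BayesNet.fintypeH BayesNet.decEqH

/-- The marginal distribution of the observables in a bipartite BN: sum over all
hidden assignments of the product of all priors and all CPDs. -/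
def BayesNet.PrB {N : ℕ} (B : BayesNet N) (x : Fin N → Bool) : ℝ :=
  ∑ σ : (h : B.H) → Fin (B.dom h),
    (∏ h, B.prior h (σ h)) * ∏ i, B.cpd i σ (x i)
namespace SPN

variable {N : ℕ}

lemma mem_mulMono {a b : Multiset (Monomial N)} {m : Monomial N}
    (h : m ∈ mulMono a b) : ∃ ma ∈ a, ∃ mb ∈ b, m = (ma.1 * mb.1, ma.2 + mb.2) := by
  simp only [mulMono, Multiset.mem_bind, Multiset.mem_map] at h
  obtain ⟨ma, hma, mb, hmb, h⟩ := h
  exact ⟨ma, hma, mb, hmb, h.symm⟩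

lemma foldr_mulMono_le (L : List (Multiset (Monomial N))) (m : Monomial N)
    (hm : m ∈ L.foldr mulMono {(1, 0)}) (s : Multiset (Monomial N)) (hs : s ∈ L) :
    ∃ mm ∈ s, mm.2 ≤ m.2 := by
  induction L generalizing m with
  | nil => cases hs
  | cons a L ih =>
    obtain ⟨ma, hma, mb, hmb, rfl⟩ := mem_mulMono hm
    rcases List.mem_cons.1 hs with rfl | hs
    · exact ⟨ma, hma, Multiset.le_add_right _ _⟩
    · obtain ⟨mm, hmm, hle⟩ := ih mb hmb hs
      exact ⟨mm, hmm, hle.trans (Multiset.le_add_left _ _)⟩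

lemma foldr_mulMono_mem (L : List (Multiset (Monomial N))) (m : Monomial N)
    (hm : m ∈ L.foldr mulMono {(1, 0)}) (p : Fin N × Bool) (hp : p ∈ m.2) :
    ∃ s ∈ L, ∃ mm ∈ s, p ∈ mm.2 := by
  induction L generalizing m with
  | nil =>
    simp only [List.foldr_nil, Multiset.mem_singleton] at hm
    subst hm; simp at hp
  | cons a L ih =>
    obtain ⟨ma, hma, mb, hmb, rfl⟩ := mem_mulMono hm
    rcases Multiset.mem_add.1 hp with h | h
    · exact ⟨a, List.mem_cons_self .., ma, hma, h⟩
    · obtain ⟨s, hs, mm, hmm, hpm⟩ := ih mb hmb h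
      exact ⟨s, List.mem_cons_of_mem _ hs, mm, hmm, hpm⟩

lemma mem_indicators_of_mem_monomials :
    ∀ (S : SPN N) (m : Monomial N), m ∈ S.monomials →
      ∀ p ∈ m.2, p ∈ S.indicators := by
  intro S
  induction S with
  | leaf i b =>
    intro m hm p hp
    simp only [monomials, Multiset.mem_singleton] at hm
    subst hm
    simp only [Multiset.mem_singleton] at hp
    simp [indicators, hp]
  | sum k w ch ih =>
    intro m hm p hp
    simp only [monomials] at hm
    rw [Multiset.mem_sum] at hm
    obtain ⟨j, _, hj⟩ := hm
    obtain ⟨m', hm', rfl⟩ := Multiset.mem_map.1 hj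
    exact Finset.mem_biUnion.2 ⟨j, Finset.mem_univ _, ih j m' hm' p hp⟩
  | prod k ch ih =>
    intro m hm p hp
    obtain ⟨s, hs, mm, hmm, hpm⟩ := foldr_mulMono_mem _ m hm p hp
    rw [List.mem_ofFn] at hs
    obtain ⟨j, rfl⟩ := hs
    exact Finset.mem_biUnion.2 ⟨j, Finset.mem_univ _, ih j mm hmm p hpm⟩

lemma exists_mem_monomial_of_mem_scope :
    ∀ (S : SPN N), S.complete → ∀ m ∈ S.monomials, ∀ X ∈ S.scope,
      ∃ b, (X, b) ∈ m.2 := by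
  intro S
  induction S with
  | leaf i b =>
    intro _ m hm X hX
    simp only [monomials, Multiset.mem_singleton] at hm
    subst hm
    simp only [scope, Finset.mem_singleton] at hX
    exact ⟨b, by simp [hX]⟩
  | sum k w ch ih =>
    intro hc m hm X hX
    simp only [monomials] at hm
    rw [Multiset.mem_sum] at hm
    obtain ⟨j, _, hj⟩ := hm
    obtain ⟨m', hm', rfl⟩ := Multiset.mem_map.1 hj
    obtain ⟨j0, _, hX0⟩ := Finset.mem_biUnion.1 hX
    have hXj : X ∈ (ch j).scope := hc.1 j j0 ▸ hX0
    exact ih j (hc.2 j) m' hm' X hXj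
  | prod k ch ih =>
    intro hc m hm X hX
    obtain ⟨j0, _, hX0⟩ := Finset.mem_biUnion.1 hX
    have hmem : monomials (ch j0) ∈ List.ofFn fun j : Fin k => monomials (ch j) := by
      rw [List.mem_ofFn]; exact ⟨j0, rfl⟩
    obtain ⟨mm, hmm, hle⟩ := foldr_mulMono_le _ m hm _ hmem
    obtain ⟨b, hb⟩ := ih j0 (hc j0) mm hmm X hX0
    exact ⟨b, Multiset.mem_of_le hle hb⟩

lemma exists_indicator_of_mem_scope :
    ∀ (S : SPN N) (X : Fin N), X ∈ S.scope → ∃ b, (X, b) ∈ S.indicators := by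
  intro S
  induction S with
  | leaf i b =>
    intro X hX
    simp only [scope, Finset.mem_singleton] at hX
    exact ⟨b, by simp [indicators, hX]⟩
  | sum k w ch ih =>
    intro X hX
    obtain ⟨j, _, hXj⟩ := Finset.mem_biUnion.1 hX
    obtain ⟨b, hb⟩ := ih j X hXj
    exact ⟨b, Finset.mem_biUnion.2 ⟨j, Finset.mem_univ _, hb⟩⟩
  | prod k ch ih =>
    intro X hX
    obtain ⟨j, _, hXj⟩ := Finset.mem_biUnion.1 hX
    obtain ⟨b, hb⟩ := ih j X hXj
    exact ⟨b, Finset.mem_biUnion.2 ⟨j, Finset.mem_univ _, hb⟩⟩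

end SPN

/-- Let `S` be a complete and consistent SPN whose root is a
product node with children `ch`.  If a variable `X` lies in
`scope (ch i) ∩ scope (ch j)` for some `i ≠ j`, then there is a single value
`b` of `X` such that every monomial in the expanded form of `f_{ch i}` and
every monomial in the expanded form of `f_{ch j}` contains the indicator
`I[X = b]`. -/
theorem spn_shared_variable_common_indicator {N k : ℕ} (ch : Fin k → SPN N)
    (hc : (SPN.prod k ch).complete) (hcons : (SPN.prod k ch).consistent)
    (i j : Fin k) (hij : i ≠ j) (X : Fin N)
    (hXi : X ∈ (ch i).scope) (hXj : X ∈ (ch j).scope) :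
    ∃ b : Bool,
      (∀ m ∈ (ch i).monomials, (X, b) ∈ m.2) ∧
      (∀ m ∈ (ch j).monomials, (X, b) ∈ m.2) := by
  obtain ⟨hcons1, _⟩ := hcons
  obtain ⟨bi, hbi⟩ := SPN.exists_indicator_of_mem_scope (ch i) X hXi
  obtain ⟨bj, hbj⟩ := SPN.exists_indicator_of_mem_scope (ch j) X hXj
  have hbij : bi = bj := by
    by_contra hne
    cases bi with
    | true => cases bj with
      | true => exact hne rfl
      | false => exact hcons1 i j X hij hbi hbj
    | false => cases bj with
      | true => exact hcons1 j i X hij.symm hbj hbi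
      | false => exact hne rfl
  subst hbij
  refine ⟨bi, ?_, ?_⟩
  · intro m hm
    obtain ⟨b', hb'⟩ := SPN.exists_mem_monomial_of_mem_scope (ch i) (hc i) m hm X hXi
    have hind : (X, b') ∈ (ch i).indicators :=
      SPN.mem_indicators_of_mem_monomials (ch i) m hm _ hb'
    have : b' = bi := by
      by_contra hne
      cases b' with
      | true => cases bi with
        | true => exact hne rfl
        | false => exact hcons1 i j X hij hind hbj
      | false => cases bi with
        | true => exact hcons1 j i X hij.symm hbj hind
        | false => exact hne rfl
    exact this ▸ hb'
  · intro m hm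
    obtain ⟨b', hb'⟩ := SPN.exists_mem_monomial_of_mem_scope (ch j) (hc j) m hm X hXj
    have hind : (X, b') ∈ (ch j).indicators :=
      SPN.mem_indicators_of_mem_monomials (ch j) m hm _ hb'
    have : b' = bi := by
      by_contra hne
      cases b' with
      | true => cases bi with
        | true => exact hne rfl
        | false => exact hcons1 j i X hij.symm hind hbi
      | false => cases bi with
        | true => exact hcons1 i j X hij hbi hind
        | false => exact hne rfl
    exact this ▸ hb'
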